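/- Under the hypotheses of the inexact Newton theorem (as above), letting x* be the unique zero of f in B̄(x₀, t*) and {x_k} the inexact Newton sequence x_{k+1} = x_k − Df(x_k)⁻¹f(x_k) + r_k with ‖r_k‖ ≤ d, one has for all k: ‖x* − x_{k+1}‖ ≤ (√3/2)·K·‖x* − x_k‖² + ‖r_k‖. -/

import Mathlib

open Set Metric

/-- Quadratic Taylor bound for a function with Lipschitz derivative on a convex set. -/
lemma newton_taylor_bound {E F : Type*} [NormedAddCommGroup E] [NormedSpace ℝ E]
    [NormedAddCommGroup F] [NormedSpace ℝ F]
    {s : Set E} (hs : Convex ℝ s) {g : E → F} {g' : E → E →L[ℝ] F} {K : ℝ}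
    (hder : ∀ z ∈ s, HasFDerivAt g (g' z) z)
    (hlip : ∀ z ∈ s, ∀ w ∈ s, ‖g' z - g' w‖ ≤ K * ‖z - w‖)
    {x y : E} (hx : x ∈ s) (hy : y ∈ s) :
    ‖g y - g x - g' x (y - x)‖ ≤ K / 2 * ‖y - x‖ ^ 2 := by
  set v := y - x with hv
  set c : ℝ → E := fun θ => x + θ • v with hc
  have hcs : ∀ θ ∈ Icc (0:ℝ) 1, c θ ∈ s := fun θ hθ => hs.add_smul_sub_mem hx hy hθ
  set φ : ℝ → F := fun θ => g (c θ) - g x - θ • (g' x v) with hφ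
  have hφ' : ∀ θ ∈ Icc (0:ℝ) 1, HasDerivAt φ ((g' (c θ) - g' x) v) θ := by
    intro θ hθ
    have h1 : HasDerivAt c v θ := by
      simpa [c] using ((hasDerivAt_id θ).smul_const v).const_add x
    have h2 : HasDerivAt (fun θ => g (c θ)) (g' (c θ) v) θ :=
      (hder _ (hcs θ hθ)).comp_hasDerivAt θ h1
    have h3 : HasDerivAt (fun θ : ℝ => θ • (g' x v)) (g' x v) θ := by
      simpa using (hasDerivAt_id θ).smul_const (g' x v)
    simpa [φ, ContinuousLinearMap.sub_apply, Pi.sub_def] using (h2.sub_const (g x)).sub h3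
  have hc1 : c 1 = y := by simp [c, hv]
  have hcont : ContinuousOn φ (Icc (0:ℝ) 1) := fun θ hθ =>
    (hφ' θ hθ).continuousAt.continuousWithinAt
  have hderiv : ∀ θ ∈ Ico (0:ℝ) 1,
      HasDerivWithinAt φ ((fun θ => (g' (c θ) - g' x) v) θ) (Ici θ) θ := fun θ hθ =>
    (hφ' θ (Ico_subset_Icc_self hθ)).hasDerivWithinAt
  have hA : ‖φ 0‖ ≤ K / 2 * ‖v‖ ^ 2 * (0:ℝ) ^ 2 := by simp [φ, c]
  have hB : ∀ θ : ℝ, HasDerivAt (fun θ : ℝ => K / 2 * ‖v‖ ^ 2 * θ ^ 2)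
      (K * ‖v‖ ^ 2 * θ) θ := by
    intro θ
    have h := (hasDerivAt_pow 2 θ).const_mul (K / 2 * ‖v‖ ^ 2)
    refine h.congr_deriv ?_
    push_cast
    ring
  have hbound : ∀ θ ∈ Ico (0:ℝ) 1, ‖(fun θ => (g' (c θ) - g' x) v) θ‖ ≤ K * ‖v‖ ^ 2 * θ := by
    intro θ hθ
    have hθ0 : 0 ≤ θ := hθ.1
    have hb1 : ‖(g' (c θ) - g' x) v‖ ≤ ‖g' (c θ) - g' x‖ * ‖v‖ :=
      ContinuousLinearMap.le_opNorm _ _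
    have hb2 : ‖g' (c θ) - g' x‖ ≤ K * ‖c θ - x‖ :=
      hlip _ (hcs θ (Ico_subset_Icc_self hθ)) _ hx
    have hb3 : ‖c θ - x‖ = θ * ‖v‖ := by
      simp [c, norm_smul, abs_of_nonneg hθ0]
    have hv0 : (0:ℝ) ≤ ‖v‖ := norm_nonneg _
    calc ‖(g' (c θ) - g' x) v‖ ≤ ‖g' (c θ) - g' x‖ * ‖v‖ := hb1
      _ ≤ K * ‖c θ - x‖ * ‖v‖ := mul_le_mul_of_nonneg_right hb2 hv0
      _ = K * ‖v‖ ^ 2 * θ := by rw [hb3]; ring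
  have key := image_norm_le_of_norm_deriv_right_le_deriv_boundary hcont hderiv hA hB hbound
    (Set.right_mem_Icc.2 (by norm_num : (0:ℝ) ≤ 1))
  simpa [φ, hc1] using key

/-- A continuous linear endomorphism close to the identity is invertible, with inverse bound. -/
lemma newton_inv_bound {E : Type*} [NormedAddCommGroup E] [NormedSpace ℝ E] [CompleteSpace E]
    {N : E →L[ℝ] E} {c : ℝ} (hc : c < 1)
    (hN : ‖ContinuousLinearMap.id ℝ E - N‖ ≤ c) :
    ∃ M : E ≃L[ℝ] E, (M : E →L[ℝ] E) = N ∧ ∀ y, ‖M.symm y‖ ≤ (1 - c)⁻¹ * ‖y‖ := by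
  set t : E →L[ℝ] E := 1 - N with ht
  have htn : ‖t‖ ≤ c := hN
  have htlt : ‖t‖ < 1 := lt_of_le_of_lt htn hc
  set u : (E →L[ℝ] E)ˣ := Units.oneSub t htlt with hu
  have huval : (u : E →L[ℝ] E) = N := by
    simp [hu, ht, Units.oneSub]
  set S : E →L[ℝ] E := ∑' n : ℕ, t ^ n with hS
  have hSinv : (↑u⁻¹ : E →L[ℝ] E) = S := rfl
  have hSN : ∀ z, S (N z) = z := by
    intro z
    have := u.inv_mul
    calc S (N z) = ((↑u⁻¹ : E →L[ℝ] E) * (↑u : E →L[ℝ] E)) z := by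
          rw [hSinv, huval]; rfl
      _ = z := by rw [u.inv_mul]; rfl
  have hNS : ∀ z, N (S z) = z := by
    intro z
    calc N (S z) = ((↑u : E →L[ℝ] E) * (↑u⁻¹ : E →L[ℝ] E)) z := by
          rw [hSinv, huval]; rfl
      _ = z := by rw [u.mul_inv]; rfl
  refine ⟨ContinuousLinearEquiv.equivOfInverse N S hSN hNS, rfl, ?_⟩
  intro y
  have hSnorm : ‖S‖ ≤ (1 - c)⁻¹ := by
    have h1 : ‖S‖ ≤ ‖(1 : E →L[ℝ] E)‖ - 1 + (1 - ‖t‖)⁻¹ :=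
      tsum_geometric_le_of_norm_lt_one t htlt
    have h2 : ‖(1 : E →L[ℝ] E)‖ ≤ 1 := ContinuousLinearMap.norm_id_le
    have h3 : (1 - ‖t‖)⁻¹ ≤ (1 - c)⁻¹ := by
      apply inv_anti₀ (by linarith) (by linarith)
    linarith
  have : (ContinuousLinearEquiv.equivOfInverse N S hSN hNS).symm y = S y := rfl
  rw [this]
  calc ‖S y‖ ≤ ‖S‖ * ‖y‖ := S.le_opNorm y
    _ ≤ (1 - c)⁻¹ * ‖y‖ := mul_le_mul_of_nonneg_right hSnorm (norm_nonneg _)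

private lemma newton_scalar1 {η K d t : ℝ} (hη : 0 ≤ η) (hK : 0 < K) (hd : 0 < d)
    (hKd : K * d ≤ 1)
    (hroot : (η + d) - (1 + K * d) * t + 3 * K / 2 * t ^ 2 = 0)
    (hsmallest : ∀ s : ℝ, (η + d) - (1 + K * d) * s + 3 * K / 2 * s ^ 2 = 0 → t ≤ s) :
    0 < t ∧ 0 < 1 - K * t ∧ (1 - K * t)⁻¹ ≤ Real.sqrt 3 ∧
      (1 - K * t)⁻¹ * (K / 2) ≤ Real.sqrt 3 / 2 * K := by
  have ht0 : 0 < t := by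
    by_contra h
    push_neg at h
    nlinarith [sq_nonneg t, mul_nonneg (mul_nonneg hK.le hd.le) (neg_nonneg.2 h),
      mul_nonneg (neg_nonneg.2 h) (mul_nonneg hK.le hK.le), sq_nonneg (K*t)]
  have hs3 : Real.sqrt 3 * Real.sqrt 3 = 3 := Real.mul_self_sqrt (by norm_num)
  have h1le : (1:ℝ) ≤ Real.sqrt 3 := by
    rw [show (1:ℝ) = Real.sqrt 1 from (Real.sqrt_one).symm]
    exact Real.sqrt_le_sqrt (by norm_num)
  have htv : 3 * K * t ≤ 1 + K * d := by
    have hK' : (K:ℝ) ≠ 0 := ne_of_gt hK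
    have hr2 : (η + d) - (1 + K * d) * (2 * (1 + K * d) / (3 * K) - t)
        + 3 * K / 2 * (2 * (1 + K * d) / (3 * K) - t) ^ 2 = 0 := by
      field_simp
      linear_combination (6*K) * hroot
    have h := hsmallest _ hr2
    have h9 : 0 < 3 * K := by linarith
    rw [le_sub_iff_add_le] at h
    have h' := (le_div_iff₀ h9).1 h
    nlinarith [h']
  have hdisc : 6 * K * (η + d) ≤ (1 + K * d) ^ 2 := by
    nlinarith [sq_nonneg (3 * K * t - (1 + K * d)), hroot, hK]
  have hu : K * d ≤ 2 - Real.sqrt 3 := by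
    have h1 : 3 ≤ (2 - K * d) ^ 2 := by nlinarith [mul_nonneg hK.le hη]
    have h2 : Real.sqrt 3 ≤ 2 - K * d := by
      have := Real.sqrt_le_sqrt h1
      rwa [Real.sqrt_sq (by linarith : (0:ℝ) ≤ 2 - K * d)] at this
    linarith
  have hKt : K * t ≤ 1 - Real.sqrt 3 / 3 := by nlinarith [htv, hu]
  have hpos : 0 < 1 - K * t := by nlinarith
  have hinv3 : (1 - K * t)⁻¹ ≤ Real.sqrt 3 := by
    have h1 : 1 ≤ Real.sqrt 3 * (1 - K * t) := by
      nlinarith [mul_nonneg (Real.sqrt_nonneg 3)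
        (by linarith : (0:ℝ) ≤ (1 - K*t) - Real.sqrt 3/3)]
    have h2 := mul_inv_cancel₀ (ne_of_gt hpos)
    nlinarith [inv_nonneg.2 hpos.le, mul_le_mul_of_nonneg_right h1 (inv_nonneg.2 hpos.le)]
  refine ⟨ht0, hpos, hinv3, by nlinarith⟩

private lemma newton_scalar2 {η K d t s0 : ℝ} (hK : 0 < K)
    (hroot : (η + d) - (1 + K * d) * t + 3 * K / 2 * t ^ 2 = 0)
    (hpos : 0 < 1 - K * t) (hs0η : s0 * (1 - K * t) ≤ η) :
    (1 - K * t)⁻¹ * (K / 2) * t ^ 2 + d ≤ t - s0 := by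
  have hid : (t - s0 - d) * (1 - K*t) - K/2 * t^2
      = η - s0 * (1 - K*t) - ((η + d) - (1 + K*d)*t + 3*K/2*t^2) := by ring
  have h1 : K/2 * t^2 ≤ (t - s0 - d) * (1 - K*t) := by
    rw [hroot] at hid; linarith
  have h2 := mul_le_mul_of_nonneg_left h1 (inv_nonneg.2 hpos.le)
  have h3 : (1 - K*t)⁻¹ * ((t - s0 - d) * (1 - K*t)) = t - s0 - d := by
    field_simp
  rw [h3] at h2
  nlinarith [h2]

private lemma newton_scalar3 {η K t s0 : ℝ} (hK : 0 < K) (hs00 : 0 ≤ s0) (hs0t : s0 ≤ t)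
    (h3 : s0 ≤ η + K / 2 * s0 ^ 2) : s0 * (1 - K * t) ≤ η := by
  nlinarith [mul_nonneg (mul_nonneg hK.le hs00) (by linarith : (0:ℝ) ≤ t - s0 / 2)]

set_option maxHeartbeats 1000000 in
theorem stmt_11
    {X Y : Type*} [NormedAddCommGroup X] [NormedSpace ℝ X] [CompleteSpace X]
    [NormedAddCommGroup Y] [NormedSpace ℝ Y] [CompleteSpace Y]
    (U : Set X) (hU : IsOpen U) (f : X → Y) (f' : X → (X →L[ℝ] Y))
    (hf : ∀ x ∈ U, HasFDerivAt f (f' x) x)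
    (x₀ : X) (hx₀ : x₀ ∈ U) (R : ℝ) (hR : 0 < R)
    (hball : Metric.closedBall x₀ R ⊆ U)
    (e₀ : X ≃L[ℝ] Y) (he₀ : (e₀ : X →L[ℝ] Y) = f' x₀)
    (η K d : ℝ) (hη : 0 ≤ η) (hK : 0 < K) (hd : 0 < d) (hKd : K * d ≤ 1)
    (hη₀ : ‖e₀.symm (f x₀)‖ ≤ η)
    (hLip : ∀ x ∈ Metric.closedBall x₀ R, ∀ y ∈ Metric.closedBall x₀ R,
      ‖(e₀.symm : Y →L[ℝ] X).comp (f' x - f' y)‖ ≤ K * ‖x - y‖)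
    (t : ℝ)
    (hroot : (η + d) - (1 + K * d) * t + 3 * K / 2 * t ^ 2 = 0)
    (hsmallest : ∀ s : ℝ, (η + d) - (1 + K * d) * s + 3 * K / 2 * s ^ 2 = 0 → t ≤ s)
    (htR : t ≤ R)
    (xstar : X) (hxstar : xstar ∈ Metric.closedBall x₀ t ∧ f xstar = 0)
    (x rs : ℕ → X) (hx0 : x 0 = x₀) (hrs : ∀ k, ‖rs k‖ ≤ d)
    (hrec : ∀ k, ∀ ek : X ≃L[ℝ] Y, (ek : X →L[ℝ] Y) = f' (x k) →
      x (k + 1) = x k - ek.symm (f (x k)) + rs k) :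
    ∀ k, ‖xstar - x (k + 1)‖ ≤
      Real.sqrt 3 / 2 * K * ‖xstar - x k‖ ^ 2 + ‖rs k‖ := by
  obtain ⟨hxs_ball, hfxs⟩ := hxstar
  set A : Y →L[ℝ] X := (e₀.symm : Y →L[ℝ] X) with hA
  obtain ⟨ht0, hpos, hinv3, hfac⟩ := newton_scalar1 hη hK hd hKd hroot hsmallest
  have hKtlt : K * t < 1 := by linarith
  set s0 : ℝ := ‖xstar - x₀‖ with hs0def
  have hs00 : 0 ≤ s0 := norm_nonneg _
  have hs0t : s0 ≤ t := by
    rw [Metric.mem_closedBall, dist_eq_norm] at hxs_ball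
    exact hxs_ball
  -- derivative setup
  have hRball : ∀ z ∈ Metric.closedBall x₀ R, HasFDerivAt (fun w => A (f w)) (A.comp (f' z)) z :=
    fun z hz => (A.hasFDerivAt).comp z (hf z (hball hz))
  have hRlip : ∀ z ∈ Metric.closedBall x₀ R, ∀ w ∈ Metric.closedBall x₀ R,
      ‖A.comp (f' z) - A.comp (f' w)‖ ≤ K * ‖z - w‖ := by
    intro z hz w hw
    have h : A.comp (f' z) - A.comp (f' w) = A.comp (f' z - f' w) := by
      ext q; simp
    rw [h]
    exact hLip z hz w hw
  have taylor : ∀ p ∈ Metric.closedBall x₀ R, ∀ q ∈ Metric.closedBall x₀ R,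
      ‖A (f q) - A (f p) - A ((f' p) (q - p))‖ ≤ K / 2 * ‖q - p‖ ^ 2 := by
    intro p hp q hq
    have h := newton_taylor_bound (convex_closedBall x₀ R) hRball hRlip hp hq
    simpa using h
  have hx₀ball : x₀ ∈ Metric.closedBall x₀ R := Metric.mem_closedBall_self hR.le
  have hxsballR : xstar ∈ Metric.closedBall x₀ R :=
    Metric.closedBall_subset_closedBall htR hxs_ball
  -- bound on s0
  have hs0η : s0 * (1 - K * t) ≤ η := by
    have h1 := taylor x₀ hx₀ball xstar hxsballR
    have h2 : A ((f' x₀) (xstar - x₀)) = xstar - x₀ := by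
      rw [← he₀]
      simp [hA]
    rw [hfxs, h2] at h1
    simp only [map_zero, zero_sub] at h1
    have h3 : s0 ≤ η + K / 2 * s0 ^ 2 := by
      have h4 : ‖-A (f x₀) - (xstar - x₀)‖ = ‖(xstar - x₀) + A (f x₀)‖ := by
        rw [← norm_neg]; congr 1; abel
      rw [h4] at h1
      have h5 : ‖A (f x₀)‖ ≤ η := hη₀
      calc s0 = ‖(xstar - x₀ + A (f x₀)) - A (f x₀)‖ := by rw [hs0def]; congr 1; abel
        _ ≤ ‖xstar - x₀ + A (f x₀)‖ + ‖A (f x₀)‖ := norm_sub_le _ _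
        _ ≤ K / 2 * s0 ^ 2 + η := by simp only [hs0def]; linarith
        _ = η + K / 2 * s0 ^ 2 := by ring
    exact newton_scalar3 hK hs00 hs0t h3
  -- the key one-step estimate
  have step : ∀ k, ‖x k - x₀‖ ≤ t → ‖xstar - x k‖ ≤ t →
      ‖xstar - x (k + 1)‖ ≤ (1 - K * t)⁻¹ * (K / 2) * ‖xstar - x k‖ ^ 2 + ‖rs k‖ := by
    intro k hb he
    have hxkball : x k ∈ Metric.closedBall x₀ R := by
      rw [Metric.mem_closedBall, dist_eq_norm]
      linarith
    set N : X →L[ℝ] X := A.comp (f' (x k)) with hN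
    have hidA : ContinuousLinearMap.id ℝ X = A.comp (f' x₀) := by
      ext z
      rw [← he₀]
      simp [hA]
    have hNid : ‖ContinuousLinearMap.id ℝ X - N‖ ≤ K * t := by
      have h1 : ContinuousLinearMap.id ℝ X - N = A.comp (f' x₀ - f' (x k)) := by
        rw [hidA]
        ext q; simp [hN]
      rw [h1]
      calc ‖A.comp (f' x₀ - f' (x k))‖ ≤ K * ‖x₀ - x k‖ := hLip x₀ hx₀ball (x k) hxkball
        _ = K * ‖x k - x₀‖ := by rw [norm_sub_rev]
        _ ≤ K * t := mul_le_mul_of_nonneg_left hb hK.le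
    obtain ⟨M, hMcoe, hMsymm⟩ := newton_inv_bound hKtlt hNid
    set ek : X ≃L[ℝ] Y := M.trans e₀ with hekdef
    have hMapp : ∀ z, M z = N z := by
      intro z
      rw [← hMcoe]
      rfl
    have hek : (ek : X →L[ℝ] Y) = f' (x k) := by
      ext z
      show e₀ (M z) = f' (x k) z
      rw [hMapp]
      simp [hN, hA]
    have hx1 := hrec k ek hek
    have heksymm : ∀ yy, ek.symm yy = M.symm (e₀.symm yy) := fun yy => rfl
    set w : X := xstar - x k with hw
    set Q : Y := f xstar - f (x k) - (f' (x k)) w with hQ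
    have hAQ : A Q = A (f xstar) - A (f (x k)) - A ((f' (x k)) w) := by
      rw [hQ]; simp
    have hMQ : M.symm (A Q) = -(ek.symm (f (x k))) - w := by
      have hNw : M.symm (N w) = w := by
        rw [← hMapp]
        exact M.symm_apply_apply w
      have h6 : A Q = -(A (f (x k))) - N w := by
        rw [hAQ, hfxs]
        simp [hN]
      rw [h6, map_sub, map_neg, hNw, heksymm]
      rfl
    have hid : xstar - x (k + 1) = -(M.symm (A Q)) - rs k := by
      rw [hx1, hMQ, hw]
      abel
    have hQbound : ‖A Q‖ ≤ K / 2 * ‖w‖ ^ 2 := by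
      have h7 := taylor (x k) hxkball xstar hxsballR
      rw [hAQ]
      simpa [← hw] using h7
    calc ‖xstar - x (k + 1)‖ = ‖M.symm (A Q) + rs k‖ := by
          rw [hid, ← norm_neg]; congr 1; abel
      _ ≤ ‖M.symm (A Q)‖ + ‖rs k‖ := norm_add_le _ _
      _ ≤ (1 - K * t)⁻¹ * ‖A Q‖ + ‖rs k‖ := by linarith [hMsymm (A Q)]
      _ ≤ (1 - K * t)⁻¹ * (K / 2 * ‖w‖ ^ 2) + ‖rs k‖ := by
          have h8 := mul_le_mul_of_nonneg_left hQbound (inv_nonneg.2 hpos.le)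
          linarith
      _ = (1 - K * t)⁻¹ * (K / 2) * ‖xstar - x k‖ ^ 2 + ‖rs k‖ := by rw [hw]; ring
  -- the invariant
  have inv : ∀ k, ‖x k - x₀‖ ≤ t ∧ ‖xstar - x k‖ ≤ t := by
    intro k
    induction k with
    | zero =>
      constructor
      · rw [hx0]; simp [ht0.le]
      · rw [hx0]; exact hs0t
    | succ n ih =>
      have hstep := step n ih.1 ih.2
      have h1 : ‖xstar - x n‖ ^ 2 ≤ t ^ 2 := by
        have := pow_le_pow_left₀ (norm_nonneg (xstar - x n)) ih.2 2
        simpa using this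
      have h2 : (0:ℝ) ≤ (1 - K * t)⁻¹ * (K / 2) :=
        mul_nonneg (inv_nonneg.2 hpos.le) (by linarith)
      have hmono := mul_le_mul_of_nonneg_left h1 h2
      have hscal := newton_scalar2 hK hroot hpos hs0η
      have he1 : ‖xstar - x (n + 1)‖ ≤ t - s0 := by linarith [hrs n]
      constructor
      · calc ‖x (n + 1) - x₀‖ = ‖(x (n+1) - xstar) + (xstar - x₀)‖ := by congr 1; abel
          _ ≤ ‖x (n+1) - xstar‖ + ‖xstar - x₀‖ := norm_add_le _ _
          _ = ‖xstar - x (n+1)‖ + s0 := by rw [norm_sub_rev]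
          _ ≤ (t - s0) + s0 := by linarith
          _ = t := by ring
      · linarith
  -- conclusion
  intro k
  have hstep := step k (inv k).1 (inv k).2
  have hsq := sq_nonneg ‖xstar - x k‖
  have hmul := mul_le_mul_of_nonneg_right hfac hsq
  linarith
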